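/- Let C be a subspace of S1 × A × S2. Then C contains no nonzero element of the form (s1,0,0) or (0,0,s2) if and only if both projections of C^⊥ onto S1* and onto S2* are surjective. (Properness of a constraint code is equivalent to trimness of its dual.) -/

import Mathlib

open Module

/-- The orthogonal complement of a constraint code `C ⊆ S1 × A × S2`, taken inside
`S1* × A* × S2*` with respect to the pairing
`⟨(s1,a,s2),(σ1,α,σ2)⟩ = σ1(s1) + α(a) + σ2(s2)`. -/
def constraintPerp {F S1 A S2 : Type*} [Field F]
    [AddCommGroup S1] [Module F S1] [AddCommGroup A] [Module F A]
    [AddCommGroup S2] [Module F S2] (C : Submodule F (S1 × A × S2)) :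
    Submodule F (Dual F S1 × Dual F A × Dual F S2) where
  carrier := {d | ∀ x ∈ C, d.1 x.1 + d.2.1 x.2.1 + d.2.2 x.2.2 = 0}
  zero_mem' := by intro x hx; simp
  add_mem' := by
    intro a b ha hb x hx
    have h1 := ha x hx
    have h2 := hb x hx
    simp only [Prod.fst_add, Prod.snd_add, LinearMap.add_apply]
    linear_combination h1 + h2
  smul_mem' := by
    intro r a ha x hx
    have h1 := ha x hx
    simp only [Prod.smul_fst, Prod.smul_snd, LinearMap.smul_apply, smul_eq_mul]
    linear_combination r * h1


open Module

/-- Key construction: if `(·,0,0)`-slice of `C` is trivial, extend any `f : Dual F S1`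
to an element of the perp with first coordinate `f`. -/
theorem aux_extend {F S1 A S2 : Type*} [Field F]
    [AddCommGroup S1] [Module F S1] [AddCommGroup A] [Module F A]
    [AddCommGroup S2] [Module F S2]
    (C : Submodule F (S1 × A × S2))
    (h : ∀ u : S1, (u, (0 : A), (0 : S2)) ∈ C → u = 0)
    (f : Dual F S1) :
    ∃ φ : Dual F (S1 × A × S2), (∀ x ∈ C, φ x = 0) ∧ ∀ u : S1, φ (u, 0, 0) = f u := by
  set i : S1 →ₗ[F] S1 × A × S2 := LinearMap.inl F S1 (A × S2)
  set j : S1 →ₗ[F] (S1 × A × S2) ⧸ C := C.mkQ.comp i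
  have hj : LinearMap.ker j = ⊥ := by
    rw [LinearMap.ker_eq_bot']
    intro u hu
    apply h
    have : C.mkQ (u, 0, 0) = 0 := hu
    rwa [Submodule.mkQ_apply, Submodule.Quotient.mk_eq_zero] at this
  obtain ⟨g, hg⟩ := j.exists_leftInverse_of_injective hj
  refine ⟨(f.comp g).comp C.mkQ, ?_, ?_⟩
  · intro x hx
    have hx0 : C.mkQ x = 0 := by
      rwa [Submodule.mkQ_apply, Submodule.Quotient.mk_eq_zero]
    simp [hx0]
  · intro u
    have : g (C.mkQ (u, 0, 0)) = u := by
      have := LinearMap.congr_fun hg u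
      simpa [j, i, Prod.mk_zero_zero] using this
    rw [Submodule.mkQ_apply] at this
    show f (g (Submodule.Quotient.mk (u, 0, 0))) = f u
    rw [this]

theorem aux_extend2 {F S1 A S2 : Type*} [Field F]
    [AddCommGroup S1] [Module F S1] [AddCommGroup A] [Module F A]
    [AddCommGroup S2] [Module F S2]
    (C : Submodule F (S1 × A × S2))
    (h : ∀ w : S2, ((0 : S1), (0 : A), w) ∈ C → w = 0)
    (g : Dual F S2) :
    ∃ φ : Dual F (S1 × A × S2), (∀ x ∈ C, φ x = 0) ∧ ∀ w : S2, φ (0, 0, w) = g w := by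
  set i : S2 →ₗ[F] S1 × A × S2 :=
    (LinearMap.inr F S1 (A × S2)).comp (LinearMap.inr F A S2)
  set j : S2 →ₗ[F] (S1 × A × S2) ⧸ C := C.mkQ.comp i
  have hj : LinearMap.ker j = ⊥ := by
    rw [LinearMap.ker_eq_bot']
    intro w hw
    apply h
    have : C.mkQ (0, 0, w) = 0 := hw
    rwa [Submodule.mkQ_apply, Submodule.Quotient.mk_eq_zero] at this
  obtain ⟨e, he⟩ := j.exists_leftInverse_of_injective hj
  refine ⟨(g.comp e).comp C.mkQ, ?_, ?_⟩
  · intro x hx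
    have hx0 : C.mkQ x = 0 := by
      rwa [Submodule.mkQ_apply, Submodule.Quotient.mk_eq_zero]
    simp [hx0]
  · intro w
    have : e (C.mkQ (0, 0, w)) = w := by
      have := LinearMap.congr_fun he w
      simpa [j, i] using this
    rw [Submodule.mkQ_apply] at this
    show g (e (Submodule.Quotient.mk (0, 0, w))) = g w
    rw [this]


/-- A constraint code `C ⊆ S1 × A × S2` is proper (contains no nonzero element of the form
`(s1,0,0)` or `(0,0,s2)`) iff its orthogonal complement `C^⊥ ⊆ S1* × A* × S2*` is trim,
i.e. both projections of `C^⊥` onto `S1*` and onto `S2*` are surjective. -/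
theorem proper_iff_dual_trim {F S1 A S2 : Type*} [Field F] [Fintype F]
    [AddCommGroup S1] [Module F S1] [AddCommGroup A] [Module F A]
    [AddCommGroup S2] [Module F S2] [FiniteDimensional F S1]
    [FiniteDimensional F A] [FiniteDimensional F S2]
    (C : Submodule F (S1 × A × S2)) :
    ((∀ u : S1, (u, (0 : A), (0 : S2)) ∈ C → u = 0) ∧
      (∀ w : S2, ((0 : S1), (0 : A), w) ∈ C → w = 0)) ↔
      ((∀ f : Dual F S1, ∃ d ∈ constraintPerp C, d.1 = f) ∧
        (∀ g : Dual F S2, ∃ d ∈ constraintPerp C, d.2.2 = g)) := by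
  have decomp : ∀ x : S1 × A × S2,
      x = (x.1, 0, 0) + ((0, x.2.1, 0) + (0, 0, x.2.2)) := by
    intro x; ext <;> simp
  constructor
  · rintro ⟨hp1, hp2⟩
    constructor
    · intro f
      obtain ⟨φ, hφ0, hφ1⟩ := aux_extend C hp1 f
      refine ⟨(f, φ.comp ((LinearMap.inr F S1 (A × S2)).comp (LinearMap.inl F A S2)),
        φ.comp ((LinearMap.inr F S1 (A × S2)).comp (LinearMap.inr F A S2))), ?_, rfl⟩
      intro x hx
      have h0 := hφ0 x hx
      have hsum : φ (x.1, 0, 0) + (φ (0, x.2.1, 0) + φ (0, 0, x.2.2)) = 0 := by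
        rw [← map_add, ← map_add, ← decomp x]; exact h0
      rw [show φ (x.1, 0, 0) = f x.1 from hφ1 x.1] at hsum
      simpa [add_assoc] using hsum
    · intro g
      obtain ⟨φ, hφ0, hφ1⟩ := aux_extend2 C hp2 g
      refine ⟨(φ.comp (LinearMap.inl F S1 (A × S2)),
        φ.comp ((LinearMap.inr F S1 (A × S2)).comp (LinearMap.inl F A S2)), g), ?_, rfl⟩
      intro x hx
      have h0 := hφ0 x hx
      have hsum : φ (x.1, 0, 0) + (φ (0, x.2.1, 0) + φ (0, 0, x.2.2)) = 0 := by
        rw [← map_add, ← map_add, ← decomp x]; exact h0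
      rw [show φ (0, 0, x.2.2) = g x.2.2 from hφ1 x.2.2] at hsum
      simpa [add_assoc, Prod.mk_zero_zero] using hsum
  · rintro ⟨h1, h2⟩
    constructor
    · intro u hu
      rw [← Module.forall_dual_apply_eq_zero_iff F]
      intro f
      obtain ⟨d, hd, hdf⟩ := h1 f
      have := hd _ hu
      simpa [hdf] using this
    · intro w hw
      rw [← Module.forall_dual_apply_eq_zero_iff F]
      intro g
      obtain ⟨d, hd, hdg⟩ := h2 g
      have := hd _ hw
      simpa [hdg] using this
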